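/- Assume q ≥ 2 and ν(∅) = 0. Then the vector of Shapley values (φ_1,…,φ_q) is the unique minimizer of the weighted least squares objective ψ ↦ Σ_{∅ ≠ C ⊊ Q} w(C) · (ν(C) − Σ_{j ∈ C} ψ_j)² over all ψ ∈ ℝ^q satisfying the constraint Σ_{j=1}^q ψ_j = ν(Q). -/

import Mathlib

open Finset

/-- Shapley value of player `j` for value function `ν` on coalitions of `Fin q`. -/
noncomputable def shapley {q : ℕ} (ν : Finset (Fin q) → ℝ) (j : Fin q) : ℝ :=
  ((q : ℝ))⁻¹ * ∑ C ∈ (Finset.univ.erase j).powerset,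
    (((q - 1).choose C.card : ℝ))⁻¹ * (ν (insert j C) - ν C)

/-- KernelSHAP weighted least squares objective over nonempty proper coalitions. -/
noncomputable def kernelObjective {q : ℕ} (ν : Finset (Fin q) → ℝ) (ψ : Fin q → ℝ) : ℝ :=
  ∑ C ∈ Finset.univ.powerset.filter
      (fun C : Finset (Fin q) => C.Nonempty ∧ C ≠ Finset.univ),
    (((q : ℝ) - 1) /
        ((q.choose C.card : ℝ) * (C.card : ℝ) * ((q : ℝ) - (C.card : ℝ)))) *
      (ν C - ∑ j ∈ C, ψ j) ^ 2


noncomputable def p (q c : ℕ) : ℝ :=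
  (Nat.factorial c * Nat.factorial (q - 1 - c)) / Nat.factorial q

noncomputable def tc (q d : ℕ) : ℝ :=
  (Nat.factorial d * Nat.factorial (q - 2 - d)) / Nat.factorial (q - 1)

noncomputable def w (q c : ℕ) : ℝ :=
  ((q : ℝ) - 1) / ((q.choose c : ℝ) * (c : ℝ) * ((q : ℝ) - (c : ℝ)))

lemma hfq {q : ℕ} (hq : 1 ≤ q) :
    (Nat.factorial q : ℝ) = q * Nat.factorial (q-1) := by
  obtain ⟨m, rfl⟩ := Nat.exists_eq_add_of_le hq
  rw [add_comm 1 m]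
  simp [Nat.factorial_succ]

lemma L1 {q c : ℕ} (hq : 1 ≤ q) (hc : c ≤ q - 1) :
    ((q : ℝ))⁻¹ * (((q - 1).choose c : ℝ))⁻¹ = p q c := by
  have h := Nat.choose_mul_factorial_mul_factorial hc
  have h' : ((q-1).choose c : ℝ) * (Nat.factorial c) * (Nat.factorial (q-1-c))
      = Nat.factorial (q-1) := by exact_mod_cast congrArg Nat.cast h
  have hch : ((q-1).choose c : ℝ) ≠ 0 := by
    have := Nat.choose_pos hc
    positivity
  have hq0 : (q : ℝ) ≠ 0 := by positivity
  rw [p, hfq hq]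
  have h1 : (Nat.factorial c : ℝ) ≠ 0 := by positivity
  have h2 : (Nat.factorial (q-1-c) : ℝ) ≠ 0 := by positivity
  have h3 : (Nat.factorial (q-1) : ℝ) ≠ 0 := by positivity
  field_simp
  nlinarith [h']

lemma L2 {q d : ℕ} (hq : 2 ≤ q) (hd : d ≤ q - 2) :
    p q d + p q (d+1) = tc q d := by
  obtain ⟨m, rfl⟩ := Nat.exists_eq_add_of_le hq
  rw [add_comm 2 m] at *
  have hd' : d ≤ m := by omega
  obtain ⟨e, he⟩ := Nat.exists_eq_add_of_le hd'
  have e1 : m + 2 - 1 - d = e + 1 := by omega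
  have e2 : m + 2 - 1 - (d + 1) = e := by omega
  have e3 : m + 2 - 2 - d = e := by omega
  have e4 : m + 2 - 1 = m + 1 := by omega
  rw [p, p, tc, e1, e2, e3, e4]
  have hf : (Nat.factorial (m+2) : ℝ) = (m+2) * Nat.factorial (m+1) := by
    exact_mod_cast congrArg Nat.cast (Nat.factorial_succ (m+1))
  have hfe : (Nat.factorial (e+1) : ℝ) = (e+1) * Nat.factorial e := by
    exact_mod_cast congrArg Nat.cast (Nat.factorial_succ e)
  have hfd : (Nat.factorial (d+1) : ℝ) = (d+1) * Nat.factorial d := by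
    exact_mod_cast congrArg Nat.cast (Nat.factorial_succ d)
  rw [hf, hfe, hfd]
  have h1 : (Nat.factorial d : ℝ) ≠ 0 := by positivity
  have h2 : (Nat.factorial e : ℝ) ≠ 0 := by positivity
  have h3 : (Nat.factorial (m+1) : ℝ) ≠ 0 := by positivity
  have h4 : (m:ℝ) + 2 ≠ 0 := by positivity
  have hde : (d:ℝ) + (e:ℝ) + 2 = (m:ℝ) + 2 := by
    have : (d:ℝ) + (e:ℝ) = m := by exact_mod_cast congrArg Nat.cast he.symm
    linarith
  field_simp
  try simp only [show 1+m = m+1 from by omega]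
  first
  | linear_combination ((d.factorial : ℝ) * e.factorial * (m+1).factorial) * hde
  | linear_combination hde

lemma L3 {q d : ℕ} (hq : 2 ≤ q) (hd : d ≤ q - 2) :
    w q (d+1) = ((q:ℝ) - 1) / q * tc q d := by
  have hc : d + 1 ≤ q := by omega
  have h := Nat.choose_mul_factorial_mul_factorial hc
  have e1 : q - (d+1) = q - 2 - d + 1 := by omega
  have hcast : ((q - (d+1) : ℕ) : ℝ) = (q:ℝ) - ((d:ℝ)+1) := by
    push_cast [hc]; ring
  have h' : (q.choose (d+1) : ℝ) * (((d:ℝ)+1) * Nat.factorial d)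
      * (((q:ℝ) - ((d:ℝ)+1)) * Nat.factorial (q - 2 - d))
      = (q:ℝ) * Nat.factorial (q-1) := by
    have hh : (q.choose (d+1) : ℝ) * Nat.factorial (d+1) * Nat.factorial (q - (d+1))
        = Nat.factorial q := by exact_mod_cast congrArg Nat.cast h
    have hfd : (Nat.factorial (d+1) : ℝ) = ((d:ℝ)+1) * Nat.factorial d := by
      exact_mod_cast congrArg Nat.cast (Nat.factorial_succ d)
    have hfe : (Nat.factorial (q - (d+1)) : ℝ)
        = ((q:ℝ) - ((d:ℝ)+1)) * Nat.factorial (q - 2 - d) := by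
      have step : (Nat.factorial (q - (d+1)) : ℝ)
          = ((q - (d+1) : ℕ) : ℝ) * Nat.factorial (q - 2 - d) := by
        rw [e1]
        exact_mod_cast congrArg Nat.cast (Nat.factorial_succ (q-2-d))
      rw [step, hcast]
    rw [hfd, hfe, hfq (by omega : 1 ≤ q)] at hh
    exact hh
  have hch : (q.choose (d+1) : ℝ) ≠ 0 := by
    have := Nat.choose_pos hc
    positivity
  have h3 : (q:ℝ) - ((d:ℝ)+1) ≠ 0 := by
    have h2q : ((d:ℝ)+1) < q := by
      have : d + 1 < q := by omega
      exact_mod_cast this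
    linarith
  have h4 : ((d:ℝ) + 1) ≠ 0 := by positivity
  have hq0 : (q:ℝ) ≠ 0 := by
    have : 0 < q := by omega
    positivity
  have h5 : (Nat.factorial (q-1) : ℝ) ≠ 0 := by positivity
  rw [w, tc, div_mul_div_comm, div_eq_div_iff (by
      push_cast
      exact mul_ne_zero (mul_ne_zero hch h4) h3) (by positivity)]
  push_cast
  linear_combination (1 - (q:ℝ)) * h'

lemma L4 {q : ℕ} (hq : 2 ≤ q) {α : Type*} [DecidableEq α] (s : Finset α)
    (hs : s.card = q - 2) :
    ∑ D ∈ s.powerset, tc q D.card = 1 := by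
  rw [Finset.sum_powerset]
  have hterm : ∀ j ∈ Finset.range (s.card + 1),
      ∑ D ∈ Finset.powersetCard j s, tc q D.card = ((q:ℝ) - 1)⁻¹ := by
    intro j hj
    have hjle : j ≤ q - 2 := by
      rw [Finset.mem_range] at hj; omega
    have hcard : ∀ D ∈ Finset.powersetCard j s, tc q D.card = tc q j := by
      intro D hD
      rw [(Finset.mem_powersetCard.1 hD).2]
    rw [Finset.sum_congr rfl hcard, Finset.sum_const, Finset.card_powersetCard, hs,
      nsmul_eq_mul]
    -- binom(q-2,j) * tc q j = 1/(q-1)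
    have h := Nat.choose_mul_factorial_mul_factorial hjle
    have h' : ((q-2).choose j : ℝ) * Nat.factorial j * Nat.factorial (q-2-j)
        = Nat.factorial (q-2) := by exact_mod_cast congrArg Nat.cast h
    have hfq1 : (Nat.factorial (q-1) : ℝ) = ((q:ℝ)-1) * Nat.factorial (q-2) := by
      have e : q - 1 = (q-2) + 1 := by omega
      have e3 : (Nat.factorial ((q-2)+1) : ℝ) = (((q-2)+1:ℕ):ℝ) * Nat.factorial (q-2) := by
        exact_mod_cast congrArg Nat.cast (Nat.factorial_succ (q-2))
      have e2 : (((q-2)+1:ℕ):ℝ) = (q:ℝ)-1 := by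
        push_cast [hq]; ring
      rw [e, e3, e2]
    rw [tc, hfq1]
    have hq1 : (q:ℝ) - 1 ≠ 0 := by
      have : (1:ℝ) < q := by exact_mod_cast (by omega : 1 < q)
      linarith
    have hf1 : (Nat.factorial (q-2) : ℝ) ≠ 0 := by positivity
    have hf2 : (Nat.factorial j : ℝ) ≠ 0 := by positivity
    have hf3 : (Nat.factorial (q-2-j) : ℝ) ≠ 0 := by positivity
    field_simp
    first
    | linear_combination ((q:ℝ)-1) * h'
    | linear_combination (1-(q:ℝ)) * h'
    | linear_combination h'
    | linear_combination (-1 : ℝ) * h'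
  rw [Finset.sum_congr rfl hterm, Finset.sum_const, hs, nsmul_eq_mul,
    Finset.card_range]
  have : ((q - 2 + 1 : ℕ) : ℝ) = (q:ℝ) - 1 := by
    have : (q - 2 + 1 : ℕ) = q - 1 := by omega
    rw [this]
    have h1 : 1 ≤ q := by omega
    push_cast [h1]
    ring
  rw [this]
  have hq1 : (q:ℝ) - 1 ≠ 0 := by
    have : (1:ℝ) < q := by exact_mod_cast (by omega : 1 < q)
    linarith
  field_simp

lemma shapley_eq {q : ℕ} (hq : 1 ≤ q) (ν : Finset (Fin q) → ℝ) (j : Fin q) :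
    shapley ν j
      = ∑ C ∈ (Finset.univ.erase j).powerset, p q C.card * (ν (insert j C) - ν C) := by
  rw [shapley, Finset.mul_sum]
  refine Finset.sum_congr rfl fun C hC => ?_
  have hC' : C ⊆ Finset.univ.erase j := Finset.mem_powerset.1 hC
  have hcard : C.card ≤ q - 1 := by
    have := Finset.card_le_card hC'
    have h2 : (Finset.univ.erase j).card = q - 1 := by
      rw [Finset.card_erase_of_mem (Finset.mem_univ j)]
      simp
    omega
  rw [← L1 hq hcard]
  ring

lemma card_s {q : ℕ} (hq : 2 ≤ q) {j k : Fin q} (hjk : j ≠ k) :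
    ((Finset.univ.erase j).erase k).card = q - 2 := by
  rw [Finset.card_erase_of_mem, Finset.card_erase_of_mem (Finset.mem_univ j)]
  · simp; omega
  · exact Finset.mem_erase.2 ⟨hjk.symm, Finset.mem_univ k⟩

lemma pairwise_shapley {q : ℕ} (hq : 2 ≤ q) (ν : Finset (Fin q) → ℝ)
    {j k : Fin q} (hjk : j ≠ k) :
    shapley ν j - shapley ν k
      = ∑ C ∈ ((Finset.univ.erase j).erase k).powerset,
          tc q C.card * (ν (insert j C) - ν (insert k C)) := by
  set s := (Finset.univ.erase j).erase k with hs
  have hks : k ∉ s := Finset.notMem_erase k _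
  have hjs : j ∉ s := by
    simp [hs, Finset.mem_erase]
  have hej : Finset.univ.erase j = insert k s := by
    rw [hs, Finset.insert_erase (Finset.mem_erase.2 ⟨hjk.symm, Finset.mem_univ k⟩)]
  have hek : Finset.univ.erase k = insert j s := by
    rw [hs, Finset.erase_right_comm,
      Finset.insert_erase (Finset.mem_erase.2 ⟨hjk, Finset.mem_univ j⟩)]
  rw [shapley_eq (by omega) ν j, shapley_eq (by omega) ν k, hej, hek,
    Finset.sum_powerset_insert hks, Finset.sum_powerset_insert hjs]
  rw [show ∀ a b c d : ℝ, a + b - (c + d) = (a - c) + (b - d) from by intros; ring]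
  rw [← Finset.sum_sub_distrib, ← Finset.sum_sub_distrib, ← Finset.sum_add_distrib]
  refine Finset.sum_congr rfl fun C hC => ?_
  have hCs : C ⊆ s := Finset.mem_powerset.1 hC
  have hkC : k ∉ C := fun h => hks (hCs h)
  have hjC : j ∉ C := fun h => hjs (hCs h)
  have hcard : C.card ≤ q - 2 := by
    have h1 := Finset.card_le_card hCs
    have h2 : s.card = q - 2 := card_s hq hjk
    omega
  have hck : (insert k C).card = C.card + 1 := Finset.card_insert_of_notMem hkC
  have hcj : (insert j C).card = C.card + 1 := Finset.card_insert_of_notMem hjC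
  have hcomm : insert j (insert k C) = insert k (insert j C) := Finset.insert_comm j k C
  rw [hck, hcj, hcomm, ← L2 hq hcard]
  ring

lemma L5 {q d : ℕ} (hq : 2 ≤ q) (hd1 : 1 ≤ d) (hd2 : d ≤ q - 1) :
    (d:ℝ) * p q (d-1) = ((q:ℝ) - (d:ℝ)) * p q d := by
  obtain ⟨e, rfl⟩ := Nat.exists_eq_add_of_le hd1
  rw [add_comm 1 e]
  have he : e ≤ q - 2 := by omega
  have e1 : e + 1 - 1 = e := by omega
  have e2 : q - 1 - e = (q - 2 - e) + 1 := by omega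
  have e3 : q - 1 - (e+1) = q - 2 - e := by omega
  rw [e1, p, p, e2, e3]
  have f1 : (Nat.factorial ((q-2-e)+1) : ℝ) = (((q-2-e)+1 : ℕ):ℝ) * Nat.factorial (q-2-e) := by
    exact_mod_cast congrArg Nat.cast (Nat.factorial_succ (q-2-e))
  have f2 : (Nat.factorial (e+1) : ℝ) = ((e:ℝ)+1) * Nat.factorial e := by
    exact_mod_cast congrArg Nat.cast (Nat.factorial_succ e)
  have f3 : (((q-2-e)+1 : ℕ):ℝ) = (q:ℝ) - 1 - (e:ℝ) := by
    have hh : (q - 2 - e) + 1 + (1 + e) = q := by omega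
    have hc := congrArg (Nat.cast : ℕ → ℝ) hh
    push_cast at hc ⊢
    linarith
  rw [f1, f2, f3]
  have hfq0 : (Nat.factorial q : ℝ) ≠ 0 := by positivity
  field_simp
  push_cast
  ring

lemma L6 {q : ℕ} (hq : 1 ≤ q) : (q:ℝ) * p q (q-1) = 1 := by
  rw [p]
  have e1 : q - 1 - (q-1) = 0 := by omega
  rw [e1]
  simp only [Nat.factorial_zero, Nat.cast_one, mul_one]
  rw [hfq hq]
  have h3 : (Nat.factorial (q-1) : ℝ) ≠ 0 := by positivity
  have hq0 : (q : ℝ) ≠ 0 := by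
    have : 0 < q := hq
    positivity
  field_simp

lemma efficiency {q : ℕ} (hq : 2 ≤ q) (ν : Finset (Fin q) → ℝ) (hν : ν ∅ = 0) :
    ∑ j, shapley ν j = ν Finset.univ := by
  have key : ∀ j : Fin q,
      shapley ν j = ∑ D ∈ (Finset.univ : Finset (Fin q)).powerset,
        ((if j ∈ D then p q (D.card - 1) * ν D else 0)
          - (if j ∈ D then 0 else p q D.card * ν D)) := by
    intro j
    set t := Finset.univ.erase j with ht
    have hje : j ∉ t := Finset.notMem_erase j _
    have hins : insert j t = (Finset.univ : Finset (Fin q)) :=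
      Finset.insert_erase (Finset.mem_univ j)
    rw [shapley_eq (by omega) ν j, ← ht, ← hins, Finset.sum_powerset_insert hje]
    have part1 : ∀ C ∈ t.powerset,
        ((if j ∈ C then p q (C.card - 1) * ν C else 0)
          - (if j ∈ C then 0 else p q C.card * ν C)) = - (p q C.card * ν C) := by
      intro C hC
      have : j ∉ C := fun h => hje (Finset.mem_powerset.1 hC h)
      rw [if_neg this, if_neg this]
      ring
    have part2 : ∀ C ∈ t.powerset,
        ((if j ∈ insert j C then p q ((insert j C).card - 1) * ν (insert j C) else 0)
          - (if j ∈ insert j C then 0 else p q (insert j C).card * ν (insert j C)))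
        = p q C.card * ν (insert j C) := by
      intro C hC
      have hjC : j ∉ C := fun h => hje (Finset.mem_powerset.1 hC h)
      rw [if_pos (Finset.mem_insert_self j C), if_pos (Finset.mem_insert_self j C),
        Finset.card_insert_of_notMem hjC]
      simp
    rw [Finset.sum_congr rfl part1, Finset.sum_congr rfl part2]
    rw [← Finset.sum_add_distrib]
    refine Finset.sum_congr rfl fun C hC => ?_
    ring
  rw [Finset.sum_congr rfl (fun j _ => key j), Finset.sum_comm]
  have inner : ∀ D ∈ (Finset.univ : Finset (Fin q)).powerset,
      (∑ j : Fin q, ((if j ∈ D then p q (D.card - 1) * ν D else 0)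
          - (if j ∈ D then 0 else p q D.card * ν D)))
      = (D.card : ℝ) * (p q (D.card - 1) * ν D)
        - ((q:ℝ) - (D.card:ℝ)) * (p q D.card * ν D) := by
    intro D hD
    rw [Finset.sum_sub_distrib]
    congr 1
    · rw [Finset.sum_ite_mem, Finset.univ_inter, Finset.sum_const, nsmul_eq_mul]
    · have : ∀ j : Fin q, (if j ∈ D then (0:ℝ) else p q D.card * ν D)
          = p q D.card * ν D - (if j ∈ D then p q D.card * ν D else 0) := by
        intro j; by_cases h : j ∈ D <;> simp [h]
      rw [Finset.sum_congr rfl (fun j _ => this j), Finset.sum_sub_distrib,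
        Finset.sum_const, Finset.sum_ite_mem, Finset.univ_inter, Finset.sum_const,
        nsmul_eq_mul, nsmul_eq_mul, Finset.card_univ, Fintype.card_fin]
      ring
  rw [Finset.sum_congr rfl inner]
  rw [Finset.sum_eq_single_of_mem (Finset.univ : Finset (Fin q))
    (Finset.mem_powerset_self _)]
  · rw [Finset.card_univ, Fintype.card_fin]
    have hL6 := L6 (show 1 ≤ q by omega)
    linear_combination (ν Finset.univ) * hL6
  · intro D hD hDne
    rcases Finset.eq_empty_or_nonempty D with rfl | hne
    · simp [hν]
    · have hd1 : 1 ≤ D.card := Finset.card_pos.2 hne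
      have hdq : D.card < q := by
        have hsub : D ⊂ Finset.univ := Finset.ssubset_univ_iff.2 hDne
        have := Finset.card_lt_card hsub
        simpa using this
      have hL5 := L5 hq hd1 (by omega : D.card ≤ q - 1)
      linear_combination (ν D) * hL5

def A (q : ℕ) : Finset (Finset (Fin q)) :=
  Finset.univ.powerset.filter (fun C : Finset (Fin q) => C.Nonempty ∧ C ≠ Finset.univ)

noncomputable def resid {q : ℕ} (ν : Finset (Fin q) → ℝ) (C : Finset (Fin q)) : ℝ :=
  ν C - ∑ i ∈ C, shapley ν i

lemma split_sum {q : ℕ} {j k : Fin q} (hjk : j ≠ k) (F : Finset (Fin q) → ℝ) :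
    ∑ C ∈ (Finset.univ : Finset (Fin q)).powerset,
        (if j ∈ C ∧ k ∉ C then F C else 0)
      = ∑ D ∈ ((Finset.univ.erase j).erase k).powerset, F (insert j D) := by
  set s := (Finset.univ.erase j).erase k with hs
  have hks : k ∉ s := Finset.notMem_erase k _
  have hjs : j ∉ s := by simp [hs, Finset.mem_erase]
  have hj' : j ∉ insert k s := by
    simp [Finset.mem_insert, hjk, hjs]
  have hej : insert k s = Finset.univ.erase j := by
    rw [hs, Finset.insert_erase (Finset.mem_erase.2 ⟨hjk.symm, Finset.mem_univ k⟩)]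
  have huniv : (Finset.univ : Finset (Fin q)) = insert j (insert k s) := by
    rw [hej, Finset.insert_erase (Finset.mem_univ j)]
  rw [huniv, Finset.sum_powerset_insert hj', Finset.sum_powerset_insert hks,
    Finset.sum_powerset_insert hks]
  have z1 : ∑ C ∈ s.powerset, (if j ∈ C ∧ k ∉ C then F C else 0) = 0 :=
    Finset.sum_eq_zero fun C hC => by
      have : j ∉ C := fun h => hjs (Finset.mem_powerset.1 hC h)
      simp [this]
  have z2 : ∑ C ∈ s.powerset,
      (if j ∈ insert k C ∧ k ∉ insert k C then F (insert k C) else 0) = 0 :=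
    Finset.sum_eq_zero fun C hC => by
      simp [Finset.mem_insert_self]
  have z3 : ∑ C ∈ s.powerset,
      (if j ∈ insert j (insert k C) ∧ k ∉ insert j (insert k C)
        then F (insert j (insert k C)) else 0) = 0 :=
    Finset.sum_eq_zero fun C hC => by
      have : k ∈ insert j (insert k C) :=
        Finset.mem_insert_of_mem (Finset.mem_insert_self k C)
      simp [this]
  have e1 : ∑ C ∈ s.powerset,
      (if j ∈ insert j C ∧ k ∉ insert j C then F (insert j C) else 0)
      = ∑ C ∈ s.powerset, F (insert j C) :=
    Finset.sum_congr rfl fun C hC => by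
      have hkC : k ∉ C := fun h => hks (Finset.mem_powerset.1 hC h)
      have : k ∉ insert j C := by
        rw [Finset.mem_insert]
        push_neg
        exact ⟨hjk.symm, hkC⟩
      simp [Finset.mem_insert_self, this]
  rw [z1, z2, z3, e1]
  ring

lemma grad {q : ℕ} (hq : 2 ≤ q) (ν : Finset (Fin q) → ℝ) (j k : Fin q) :
    ∑ C ∈ A q, (if j ∈ C then w q C.card * resid ν C else 0)
      = ∑ C ∈ A q, (if k ∈ C then w q C.card * resid ν C else 0) := by
  by_cases hjk : j = k
  · rw [hjk]
  set X : Finset (Fin q) → ℝ := fun C => w q C.card * resid ν C with hX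
  have split : ∀ (a b : Fin q) (C : Finset (Fin q)),
      (if a ∈ C then X C else 0)
        = (if a ∈ C ∧ b ∈ C then X C else 0) + (if a ∈ C ∧ b ∉ C then X C else 0) := by
    intro a b C
    by_cases h1 : a ∈ C <;> by_cases h2 : b ∈ C <;> simp [h1, h2]
  have ext : ∀ (a b : Fin q), a ≠ b →
      ∑ C ∈ A q, (if a ∈ C ∧ b ∉ C then X C else 0)
        = ∑ C ∈ (Finset.univ : Finset (Fin q)).powerset,
            (if a ∈ C ∧ b ∉ C then X C else 0) := by
    intro a b _
    rw [A, Finset.sum_filter]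
    refine (Finset.sum_congr rfl fun C hC => ?_).symm
    by_cases h : a ∈ C ∧ b ∉ C
    · have hcond : C.Nonempty ∧ C ≠ Finset.univ :=
        ⟨⟨a, h.1⟩, fun he => h.2 (by rw [he]; exact Finset.mem_univ b)⟩
      rw [if_pos hcond]
    · simp [h]
  have hkj : k ≠ j := fun h => hjk h.symm
  rw [Finset.sum_congr rfl (fun C _ => split j k C),
    Finset.sum_congr rfl (fun C _ => split k j C),
    Finset.sum_add_distrib, Finset.sum_add_distrib,
    ext j k hjk, ext k j hkj, split_sum hjk X, split_sum hkj X,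
    Finset.erase_right_comm (a := k) (b := j)]
  have sym : ∑ C ∈ A q, (if j ∈ C ∧ k ∈ C then X C else 0)
      = ∑ C ∈ A q, (if k ∈ C ∧ j ∈ C then X C else 0) :=
    Finset.sum_congr rfl fun C _ => if_congr and_comm rfl rfl
  rw [sym]
  congr 1
  -- remains: ∑ D ∈ s.powerset, X (insert j D) = ∑ D ∈ s.powerset, X (insert k D)
  set s := (Finset.univ.erase j).erase k with hs
  have hks : k ∉ s := Finset.notMem_erase k _
  have hjs : j ∉ s := by simp [hs, Finset.mem_erase]
  have hcs : s.card = q - 2 := card_s hq hjk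
  have key : ∀ D ∈ s.powerset,
      X (insert j D) - X (insert k D)
        = ((q:ℝ)-1)/q * (tc q D.card * (ν (insert j D) - ν (insert k D)))
          - ((q:ℝ)-1)/q * (tc q D.card * (shapley ν j - shapley ν k)) := by
    intro D hD
    have hDs : D ⊆ s := Finset.mem_powerset.1 hD
    have hjD : j ∉ D := fun h => hjs (hDs h)
    have hkD : k ∉ D := fun h => hks (hDs h)
    have hcj : (insert j D).card = D.card + 1 := Finset.card_insert_of_notMem hjD
    have hck : (insert k D).card = D.card + 1 := Finset.card_insert_of_notMem hkD
    have hdle : D.card ≤ q - 2 := by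
      have := Finset.card_le_card hDs
      omega
    have hrj : resid ν (insert j D)
        = ν (insert j D) - (shapley ν j + ∑ i ∈ D, shapley ν i) := by
      rw [resid, Finset.sum_insert hjD]
    have hrk : resid ν (insert k D)
        = ν (insert k D) - (shapley ν k + ∑ i ∈ D, shapley ν i) := by
      rw [resid, Finset.sum_insert hkD]
    rw [hX]
    simp only
    rw [hcj, hck, hrj, hrk, L3 hq hdle]
    ring
  have sumdiff : ∑ D ∈ s.powerset, (X (insert j D) - X (insert k D)) = 0 := by
    rw [Finset.sum_congr rfl key, Finset.sum_sub_distrib, ← Finset.mul_sum, ← Finset.mul_sum]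
    rw [← pairwise_shapley hq ν hjk]
    have h2 : ∑ D ∈ s.powerset, tc q D.card * (shapley ν j - shapley ν k)
        = (∑ D ∈ s.powerset, tc q D.card) * (shapley ν j - shapley ν k) := by
      rw [Finset.sum_mul]
    rw [h2, L4 hq s hcs]
    ring
  rw [Finset.sum_sub_distrib] at sumdiff
  linarith

lemma cross {q : ℕ} (hq : 2 ≤ q) (ν : Finset (Fin q) → ℝ) (δ : Fin q → ℝ)
    (hδ : ∑ j, δ j = 0) :
    ∑ C ∈ A q, w q C.card * resid ν C * (∑ j ∈ C, δ j) = 0 := by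
  have step1 : ∀ C ∈ A q, w q C.card * resid ν C * (∑ j ∈ C, δ j)
      = ∑ j : Fin q, (if j ∈ C then δ j * (w q C.card * resid ν C) else 0) := by
    intro C hC
    rw [Finset.sum_ite_mem, Finset.univ_inter, Finset.mul_sum]
    rw [Finset.sum_congr rfl (fun j _ => by ring : ∀ j ∈ C,
      w q C.card * resid ν C * δ j = δ j * (w q C.card * resid ν C))]
  rw [Finset.sum_congr rfl step1, Finset.sum_comm]
  have step2 : ∀ j : Fin q,
      ∑ C ∈ A q, (if j ∈ C then δ j * (w q C.card * resid ν C) else 0)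
        = δ j * ∑ C ∈ A q, (if j ∈ C then w q C.card * resid ν C else 0) := by
    intro j
    rw [Finset.mul_sum]
    refine Finset.sum_congr rfl fun C hC => ?_
    by_cases h : j ∈ C <;> simp [h]
  rw [Finset.sum_congr rfl (fun j _ => step2 j)]
  have j0 : Fin q := ⟨0, by omega⟩
  have step3 : ∀ j : Fin q,
      ∑ C ∈ A q, (if j ∈ C then w q C.card * resid ν C else 0)
        = ∑ C ∈ A q, (if j0 ∈ C then w q C.card * resid ν C else 0) :=
    fun j => grad hq ν j j0
  rw [Finset.sum_congr rfl (fun j _ => by rw [step3 j]), ← Finset.sum_mul, hδ, zero_mul]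

lemma w_pos {q c : ℕ} (hq : 2 ≤ q) (h1 : 1 ≤ c) (h2 : c ≤ q - 1) : 0 < w q c := by
  rw [w]
  apply div_pos
  · have : (1:ℝ) < q := by exact_mod_cast (by omega : 1 < q)
    linarith
  · have hcq : c ≤ q := by omega
    have hch : 0 < (q.choose c : ℝ) := by exact_mod_cast Nat.choose_pos hcq
    have hc : 0 < (c:ℝ) := by exact_mod_cast h1
    have hlt : (c:ℝ) < (q:ℝ) := by exact_mod_cast (by omega : c < q)
    have : 0 < (q:ℝ) - (c:ℝ) := by linarith
    positivity

lemma kernelObjective_eq {q : ℕ} (ν : Finset (Fin q) → ℝ) (ψ : Fin q → ℝ) :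
    kernelObjective ν ψ = ∑ C ∈ A q, w q C.card * (ν C - ∑ j ∈ C, ψ j) ^ 2 := rfl


/-- the Shapley values are the unique minimizer of the KernelSHAP
objective under the efficiency constraint. -/
theorem kernelSHAP_unique_minimizer (q : ℕ) (hq : 2 ≤ q)
    (ν : Finset (Fin q) → ℝ) (hν : ν ∅ = 0) :
    (∑ j, shapley ν j = ν Finset.univ) ∧
    ∀ ψ : Fin q → ℝ, (∑ j, ψ j = ν Finset.univ) → ψ ≠ shapley ν →
      kernelObjective ν (shapley ν) < kernelObjective ν ψ := by
  refine ⟨efficiency hq ν hν, fun ψ hψ hne => ?_⟩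
  set φ := shapley ν with hφ
  set δ : Fin q → ℝ := fun j => ψ j - φ j with hδdef
  have hδ : ∑ j, δ j = 0 := by
    rw [hδdef]
    simp only
    rw [Finset.sum_sub_distrib, hψ, hφ, efficiency hq ν hν, sub_self]
  have expand : kernelObjective ν ψ
      = kernelObjective ν φ + ∑ C ∈ A q, w q C.card * (∑ j ∈ C, δ j) ^ 2 := by
    rw [kernelObjective_eq, kernelObjective_eq]
    have perC : ∀ C ∈ A q,
        w q C.card * (ν C - ∑ j ∈ C, ψ j) ^ 2
          = (w q C.card * (ν C - ∑ j ∈ C, φ j) ^ 2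
              + w q C.card * (∑ j ∈ C, δ j) ^ 2)
            + (-2) * (w q C.card * resid ν C * (∑ j ∈ C, δ j)) := by
      intro C hC
      have hsplit : ∑ j ∈ C, ψ j = (∑ j ∈ C, φ j) + ∑ j ∈ C, δ j := by
        rw [← Finset.sum_add_distrib]
        exact Finset.sum_congr rfl fun j _ => by rw [hδdef]; ring
      rw [hsplit, resid, hφ]
      ring
    rw [Finset.sum_congr rfl perC, Finset.sum_add_distrib, Finset.sum_add_distrib,
      ← Finset.mul_sum, cross hq ν δ hδ]
    ring
  have hwnonneg : ∀ C ∈ A q, 0 ≤ w q C.card * (∑ j ∈ C, δ j) ^ 2 := by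
    intro C hC
    rw [A, Finset.mem_filter] at hC
    have h1 : 1 ≤ C.card := Finset.card_pos.2 hC.2.1
    have h2 : C.card ≤ q - 1 := by
      have hsub : C ⊂ Finset.univ := Finset.ssubset_univ_iff.2 hC.2.2
      have := Finset.card_lt_card hsub
      simp only [Finset.card_univ, Fintype.card_fin] at this
      omega
    have := w_pos hq h1 h2
    positivity
  obtain ⟨j1, hj1⟩ := Function.ne_iff.1 hne
  have hδj1 : δ j1 ≠ 0 := by
    rw [hδdef]
    simpa [sub_ne_zero] using hj1
  have hmem : ({j1} : Finset (Fin q)) ∈ A q := by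
    rw [A, Finset.mem_filter]
    refine ⟨Finset.mem_powerset.2 (Finset.subset_univ _), Finset.singleton_nonempty j1, ?_⟩
    intro h
    have := congrArg Finset.card h
    simp only [Finset.card_singleton, Finset.card_univ, Fintype.card_fin] at this
    omega
  have hterm : 0 < w q ({j1} : Finset (Fin q)).card * (∑ j ∈ ({j1} : Finset (Fin q)), δ j) ^ 2 := by
    rw [Finset.card_singleton, Finset.sum_singleton]
    have hw := w_pos hq le_rfl (by omega : 1 ≤ q - 1)
    positivity
  have hQ : 0 < ∑ C ∈ A q, w q C.card * (∑ j ∈ C, δ j) ^ 2 :=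
    lt_of_lt_of_le hterm (Finset.single_le_sum hwnonneg hmem)
  rw [expand]
  linarith
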